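/- Monotonicity of the composite Lyapunov function along solutions of the path-coordination system. Let ξ : [0,∞) → ℝ^{(n+1)N} be a differentiable function satisfying ξ̇^i(t) = χ^i(ξ^i(t), w(t)) for all i, where w(t) collects the (n+1)-th components. Define V(t) = ½( Φ(ξ(t))ᵀ K Φ(ξ(t)) + k_c (w(t) − w*)ᵀ L (w(t) − w*) ). Then V is differentiable with V̇(t) = −‖K Φ(ξ(t))‖² − ‖𝔉(w(t))ᵀ K Φ(ξ(t)) − k_c L (w(t) − w*)‖² ≤ −‖K Φ(ξ(t))‖² ≤ 0 for all t; in particular V is nonincreasing, and Φ(ξ(t)) and Dᵀ(w(t) − w*) remain bounded for all t ≥ 0. -/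

import Mathlib

open Filter Topology Matrix

/-- stacked path-following error `Φ ∈ ℝ^{nN}`, indexed by robot–coordinate pairs -/
noncomputable def stackPhi (n N : ℕ) (f : Fin N → Fin n → ℝ → ℝ)
    (x : Fin N → Fin n → ℝ) (w : Fin N → ℝ) : Fin N × Fin n → ℝ :=
  fun p => x p.1 p.2 - f p.1 p.2 (w p.1)

/-- block-diagonal gain matrix `K = blockdiag(K^1, …, K^N)` -/
noncomputable def stackK (n N : ℕ) (k : Fin N → Fin n → ℝ) :
    Matrix (Fin N × Fin n) (Fin N × Fin n) ℝ :=
  Matrix.diagonal fun p => k p.1 p.2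

/-- block-diagonal matrix `𝔉(w) = blockdiag(f^1'(w^1), …, f^N'(w^N)) ∈ ℝ^{nN×N}` -/
noncomputable def stackF (n N : ℕ) (f : Fin N → Fin n → ℝ → ℝ) (w : Fin N → ℝ) :
    Matrix (Fin N × Fin n) (Fin N) ℝ :=
  fun p i => if p.1 = i then deriv (f p.1 p.2) (w p.1) else 0

/-- **Monotonicity of the composite Lyapunov function along solutions of the
path-coordination system.**  With
`V(t) = ½(Φᵀ K Φ + k_c (w - w*)ᵀ L (w - w*))` along a solution of
`ξ̇^i = χ^i(ξ^i, w)` on `[0, ∞)`: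
`V̇(t) = -‖KΦ‖² - ‖𝔉(w)ᵀKΦ - k_c L(w - w*)‖² ≤ -‖KΦ‖² ≤ 0`;
in particular `V` is nonincreasing and `Φ` and `Dᵀ(w - w*)` remain bounded.
(Squared Euclidean norms are expressed via `⬝ᵥ`.) -/
theorem lyapunov_monotone_paths
    (n N : ℕ) (hn : 1 ≤ n) (hN : 1 ≤ N)
    (f : Fin N → Fin n → ℝ → ℝ) (hf : ∀ i j, ContDiff ℝ 2 (f i j))
    (k : Fin N → Fin n → ℝ) (hk : ∀ i j, 0 < k i j)
    (kc : ℝ) (hkc : 0 < kc)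
    (G : SimpleGraph (Fin N)) [DecidableRel G.Adj]
    (E : ℕ) (D : Matrix (Fin N) (Fin E) ℝ)
    (hD : G.lapMatrix ℝ = D * D.transpose)
    (wstar : Fin N → ℝ)
    (x : ℝ → Fin N → Fin n → ℝ) (w : ℝ → Fin N → ℝ)
    -- the first `n` components of `χ^i`
    (hode_x : ∀ (i : Fin N) (j : Fin n) (t : ℝ), 0 ≤ t →
      HasDerivAt (fun s => x s i j)
        ((-1 : ℝ) ^ n * deriv (f i j) (w t i)
          - k i j * (x t i j - f i j (w t i))) t)
    -- the `(n+1)`-th component of `χ^i`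
    (hode_w : ∀ (i : Fin N) (t : ℝ), 0 ≤ t →
      HasDerivAt (fun s => w s i)
        ((-1 : ℝ) ^ n
          + (∑ l, k i l * (x t i l - f i l (w t i)) * deriv (f i l) (w t i))
          + kc * (-(G.lapMatrix ℝ *ᵥ (fun m => w t m - wstar m)) i)) t)
    -- the composite Lyapunov function `V`
    (V : ℝ → ℝ)
    (hV : ∀ t, V t = (1 / 2) *
      (stackPhi n N f (x t) (w t) ⬝ᵥ (stackK n N k *ᵥ stackPhi n N f (x t) (w t))
        + kc * ((fun m => w t m - wstar m) ⬝ᵥ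
            (G.lapMatrix ℝ *ᵥ (fun m => w t m - wstar m))))) :
    -- `V` is differentiable with
    -- `V̇ = -‖KΦ‖² - ‖𝔉ᵀKΦ - k_c L w̃‖²`
    (∀ t : ℝ, 0 ≤ t →
      HasDerivAt V
        (-((stackK n N k *ᵥ stackPhi n N f (x t) (w t)) ⬝ᵥ
            (stackK n N k *ᵥ stackPhi n N f (x t) (w t)))
          - (((stackF n N f (w t)).transpose *ᵥ
                (stackK n N k *ᵥ stackPhi n N f (x t) (w t))
              - kc • (G.lapMatrix ℝ *ᵥ (fun m => w t m - wstar m))) ⬝ᵥ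
             ((stackF n N f (w t)).transpose *ᵥ
                (stackK n N k *ᵥ stackPhi n N f (x t) (w t))
              - kc • (G.lapMatrix ℝ *ᵥ (fun m => w t m - wstar m))))) t) ∧
    -- and this derivative is `≤ -‖KΦ‖² ≤ 0`
    (∀ t : ℝ, 0 ≤ t →
      (-((stackK n N k *ᵥ stackPhi n N f (x t) (w t)) ⬝ᵥ
            (stackK n N k *ᵥ stackPhi n N f (x t) (w t)))
          - (((stackF n N f (w t)).transpose *ᵥ
                (stackK n N k *ᵥ stackPhi n N f (x t) (w t))
              - kc • (G.lapMatrix ℝ *ᵥ (fun m => w t m - wstar m))) ⬝ᵥ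
             ((stackF n N f (w t)).transpose *ᵥ
                (stackK n N k *ᵥ stackPhi n N f (x t) (w t))
              - kc • (G.lapMatrix ℝ *ᵥ (fun m => w t m - wstar m)))))
        ≤ -((stackK n N k *ᵥ stackPhi n N f (x t) (w t)) ⬝ᵥ
            (stackK n N k *ᵥ stackPhi n N f (x t) (w t))) ∧
      -((stackK n N k *ᵥ stackPhi n N f (x t) (w t)) ⬝ᵥ
          (stackK n N k *ᵥ stackPhi n N f (x t) (w t))) ≤ 0) ∧
    -- `V` is nonincreasing on `[0, ∞)`
    (∀ s t : ℝ, 0 ≤ s → s ≤ t → V t ≤ V s) ∧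
    -- `Φ` and `Dᵀ(w - w*)` remain bounded on `[0, ∞)`
    (∃ C : ℝ,
      (∀ t : ℝ, 0 ≤ t → ∀ p : Fin N × Fin n,
        |stackPhi n N f (x t) (w t) p| ≤ C) ∧
      (∀ t : ℝ, 0 ≤ t → ∀ e : Fin E,
        |(D.transpose *ᵥ (fun m => w t m - wstar m)) e| ≤ C)) := by
  haveI : Nonempty (Fin N) := ⟨⟨0, hN⟩⟩
  haveI : Nonempty (Fin n) := ⟨⟨0, hn⟩⟩
  have hfd : ∀ (i : Fin N) (j : Fin n) (y : ℝ), DifferentiableAt ℝ (f i j) y := fun i j y =>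
    (hf i j).differentiable (by norm_num) y
  have hsymL : ∀ i m : Fin N, G.lapMatrix ℝ i m = G.lapMatrix ℝ m i := fun i m =>
    (G.isSymm_lapMatrix (R := ℝ)).apply m i
  have hrow : ∀ m : Fin N, ∑ i, G.lapMatrix ℝ m i = 0 := by
    intro m
    have := congrFun (G.lapMatrix_mulVec_const_eq_zero (R := ℝ)) m
    simpa [Matrix.mulVec, dotProduct] using this
  -- Part 1: the derivative
  have hder : ∀ t : ℝ, 0 ≤ t →
      HasDerivAt V
        (-((stackK n N k *ᵥ stackPhi n N f (x t) (w t)) ⬝ᵥ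
            (stackK n N k *ᵥ stackPhi n N f (x t) (w t)))
          - (((stackF n N f (w t)).transpose *ᵥ
                (stackK n N k *ᵥ stackPhi n N f (x t) (w t))
              - kc • (G.lapMatrix ℝ *ᵥ (fun m => w t m - wstar m))) ⬝ᵥ
             ((stackF n N f (w t)).transpose *ᵥ
                (stackK n N k *ᵥ stackPhi n N f (x t) (w t))
              - kc • (G.lapMatrix ℝ *ᵥ (fun m => w t m - wstar m))))) t := by
    intro t ht
    -- abbreviations (values at time t)
    set φv : Fin N × Fin n → ℝ := fun p => x t p.1 p.2 - f p.1 p.2 (w t p.1) with hφv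
    set Lwv : Fin N → ℝ := fun i => ∑ m, G.lapMatrix ℝ i m * (w t m - wstar m) with hLwv
    set sv : Fin N → ℝ := fun i =>
      ∑ l, k i l * (x t i l - f i l (w t i)) * deriv (f i l) (w t i) with hsv
    set dwv : Fin N → ℝ := fun i => (-1 : ℝ) ^ n + sv i + kc * (-(Lwv i)) with hdwv
    set dφv : Fin N × Fin n → ℝ := fun p =>
      ((-1 : ℝ) ^ n * deriv (f p.1 p.2) (w t p.1) - k p.1 p.2 * φv p)
        - deriv (f p.1 p.2) (w t p.1) * dwv p.1 with hdφv
    have hmv : ∀ i, (G.lapMatrix ℝ *ᵥ (fun m => w t m - wstar m)) i = Lwv i := fun i => rfl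
    have hw' : ∀ i, HasDerivAt (fun s => w s i) (dwv i) t := by
      intro i
      have h := hode_w i t ht
      simpa [hdwv, hsv, hLwv, Matrix.mulVec, dotProduct] using h
    have hcomp : ∀ (i : Fin N) (j : Fin n),
        HasDerivAt (fun s => f i j (w s i)) (deriv (f i j) (w t i) * dwv i) t := fun i j =>
      (hfd i j (w t i)).hasDerivAt.comp t (hw' i)
    have hphi' : ∀ p : Fin N × Fin n,
        HasDerivAt (fun s => x s p.1 p.2 - f p.1 p.2 (w s p.1)) (dφv p) t := fun p =>
      (hode_x p.1 p.2 t ht).sub (hcomp p.1 p.2)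
    -- V as explicit sums
    have hVE : V = fun s => (1 / 2) *
        ((∑ p : Fin N × Fin n, (x s p.1 p.2 - f p.1 p.2 (w s p.1))
            * (k p.1 p.2 * (x s p.1 p.2 - f p.1 p.2 (w s p.1))))
          + kc * ∑ i, (w s i - wstar i) * (∑ m, G.lapMatrix ℝ i m * (w s m - wstar m))) := by
      funext s
      rw [hV]
      simp [stackPhi, stackK, dotProduct, Matrix.mulVec, Matrix.diagonal_apply, ite_mul, zero_mul, Finset.sum_ite_eq]
    have hD1 : HasDerivAt (fun s => ∑ p : Fin N × Fin n,
        (x s p.1 p.2 - f p.1 p.2 (w s p.1)) * (k p.1 p.2 * (x s p.1 p.2 - f p.1 p.2 (w s p.1))))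
        (∑ p : Fin N × Fin n, (dφv p * (k p.1 p.2 * φv p) + φv p * (k p.1 p.2 * dφv p))) t :=
      HasDerivAt.fun_sum fun p _ => (hphi' p).mul ((hphi' p).const_mul (k p.1 p.2))
    have hD2 : HasDerivAt (fun s => ∑ i, (w s i - wstar i)
        * (∑ m, G.lapMatrix ℝ i m * (w s m - wstar m)))
        (∑ i, (dwv i * Lwv i + (w t i - wstar i) * (∑ m, G.lapMatrix ℝ i m * dwv m))) t := by
      refine HasDerivAt.fun_sum fun i _ => ?_
      exact ((hw' i).sub_const _).mul
        (HasDerivAt.fun_sum fun m _ => ((hw' m).sub_const _).const_mul (G.lapMatrix ℝ i m))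
    rw [hVE]
    have hDA := ((hD1.add (hD2.const_mul kc)).const_mul (1 / 2 : ℝ))
    convert hDA using 1
    case e'_4 => rfl
    case e'_5 => rfl
    case e'_8 => rfl
    -- now the algebraic identity
    -- auxiliary: target pieces
    have hKΦ : ∀ p : Fin N × Fin n,
        (stackK n N k *ᵥ stackPhi n N f (x t) (w t)) p = k p.1 p.2 * φv p := by
      intro p
      simp [stackK, stackPhi, Matrix.mulVec_diagonal, hφv]
    have hFv : ∀ i, ((stackF n N f (w t)).transpose *ᵥ
        (stackK n N k *ᵥ stackPhi n N f (x t) (w t))) i = sv i := by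
      intro i
      show ∑ p : Fin N × Fin n, (stackF n N f (w t)).transpose i p
          * (stackK n N k *ᵥ stackPhi n N f (x t) (w t)) p = sv i
      rw [Fintype.sum_prod_type]
      rw [Finset.sum_eq_single i]
      · rw [hsv]
        refine Finset.sum_congr rfl fun j _ => ?_
        rw [hKΦ (i, j)]
        simp [stackF, Matrix.transpose_apply, hφv]
        ring
      · intro b _ hb
        apply Finset.sum_eq_zero
        intro j _
        simp [stackF, Matrix.transpose_apply, hb]
      · intro h; exact absurd (Finset.mem_univ i) h
    have hQ : ∀ i, (((stackF n N f (w t)).transpose *ᵥ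
          (stackK n N k *ᵥ stackPhi n N f (x t) (w t))
        - kc • (G.lapMatrix ℝ *ᵥ (fun m => w t m - wstar m)))) i = sv i - kc * Lwv i := by
      intro i
      rw [Pi.sub_apply, hFv i, Pi.smul_apply, hmv i, smul_eq_mul]
    -- zero row-sum fact
    have hzero : ∑ i, Lwv i = 0 := by
      rw [hLwv]
      rw [Finset.sum_comm]
      refine Finset.sum_eq_zero fun m _ => ?_
      rw [← Finset.sum_mul]
      have : ∑ i, G.lapMatrix ℝ i m = 0 := by
        rw [Finset.sum_congr rfl fun i _ => hsymL i m]
        exact hrow m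
      rw [this, zero_mul]
    -- symmetry swap
    have hsym : ∑ i, (w t i - wstar i) * (∑ m, G.lapMatrix ℝ i m * dwv m)
        = ∑ i, dwv i * Lwv i := by
      calc ∑ i, (w t i - wstar i) * (∑ m, G.lapMatrix ℝ i m * dwv m)
          = ∑ i, ∑ m, (w t i - wstar i) * (G.lapMatrix ℝ i m * dwv m) := by
            refine Finset.sum_congr rfl fun i _ => ?_; rw [Finset.mul_sum]
        _ = ∑ m, ∑ i, (w t i - wstar i) * (G.lapMatrix ℝ i m * dwv m) := Finset.sum_comm
        _ = ∑ m, dwv m * Lwv m := by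
            refine Finset.sum_congr rfl fun m _ => ?_
            rw [hLwv, Finset.mul_sum]
            refine Finset.sum_congr rfl fun i _ => ?_
            rw [hsymL i m]; ring
    -- target as sums
    have htarget : -((stackK n N k *ᵥ stackPhi n N f (x t) (w t)) ⬝ᵥ
            (stackK n N k *ᵥ stackPhi n N f (x t) (w t)))
          - (((stackF n N f (w t)).transpose *ᵥ
                (stackK n N k *ᵥ stackPhi n N f (x t) (w t))
              - kc • (G.lapMatrix ℝ *ᵥ (fun m => w t m - wstar m))) ⬝ᵥ
             ((stackF n N f (w t)).transpose *ᵥ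
                (stackK n N k *ᵥ stackPhi n N f (x t) (w t))
              - kc • (G.lapMatrix ℝ *ᵥ (fun m => w t m - wstar m))))
        = -(∑ i, ∑ j, (k i j * φv (i, j)) * (k i j * φv (i, j)))
          - ∑ i, (sv i - kc * Lwv i) * (sv i - kc * Lwv i) := by
      have h1 : (stackK n N k *ᵥ stackPhi n N f (x t) (w t)) ⬝ᵥ
          (stackK n N k *ᵥ stackPhi n N f (x t) (w t))
          = ∑ i, ∑ j, (k i j * φv (i, j)) * (k i j * φv (i, j)) := by
        show ∑ p : Fin N × Fin n, _ * _ = _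
        rw [Fintype.sum_prod_type]
        exact Finset.sum_congr rfl fun i _ => Finset.sum_congr rfl fun j _ => by
          rw [hKΦ (i, j)]
      have h2 : (((stackF n N f (w t)).transpose *ᵥ
                (stackK n N k *ᵥ stackPhi n N f (x t) (w t))
              - kc • (G.lapMatrix ℝ *ᵥ (fun m => w t m - wstar m))) ⬝ᵥ
             ((stackF n N f (w t)).transpose *ᵥ
                (stackK n N k *ᵥ stackPhi n N f (x t) (w t))
              - kc • (G.lapMatrix ℝ *ᵥ (fun m => w t m - wstar m))))
          = ∑ i, (sv i - kc * Lwv i) * (sv i - kc * Lwv i) := by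
        show ∑ i, _ * _ = _
        exact Finset.sum_congr rfl fun i _ => by rw [hQ i]
      rw [h1, h2]
    have hsym' : ∑ i, (dwv i * Lwv i + (w t i - wstar i) * (∑ m, G.lapMatrix ℝ i m * dwv m))
        = ∑ i, dwv i * Lwv i + ∑ i, dwv i * Lwv i := by
      rw [Finset.sum_add_distrib, hsym]
    rw [htarget, hsym']
    have hS1 : ∑ p : Fin N × Fin n, (dφv p * (k p.1 p.2 * φv p) + φv p * (k p.1 p.2 * dφv p))
        = ∑ i, (-2 * (∑ j, (k i j * φv (i, j)) * (k i j * φv (i, j)))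
            - 2 * sv i * (sv i - kc * Lwv i)) := by
      rw [Fintype.sum_prod_type]
      refine Finset.sum_congr rfl fun i _ => ?_
      have : ∀ j : Fin n, dφv (i, j) * (k i j * φv (i, j)) + φv (i, j) * (k i j * dφv (i, j))
          = -2 * ((k i j * φv (i, j)) * (k i j * φv (i, j)))
            + (-2 * (sv i - kc * Lwv i)) *
              (k i j * (x t i j - f i j (w t i)) * deriv (f i j) (w t i)) := by
        intro j
        rw [hdφv, hdwv, hφv]
        ring
      rw [Finset.sum_congr rfl fun j _ => this j, Finset.sum_add_distrib,
        ← Finset.mul_sum, ← Finset.mul_sum,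
        show (∑ j, k i j * (x t i j - f i j (w t i)) * deriv (f i j) (w t i)) = sv i from rfl]
      ring
    have hS2 : ∑ i, dwv i * Lwv i
        = (-1 : ℝ) ^ n * ∑ i, Lwv i + ∑ i, (sv i * Lwv i - kc * (Lwv i * Lwv i)) := by
      rw [Finset.mul_sum, ← Finset.sum_add_distrib]
      refine Finset.sum_congr rfl fun i _ => ?_
      rw [hdwv]
      ring
    rw [hS1, hS2, hzero, mul_zero, zero_add,
      ← Finset.sum_add_distrib, Finset.mul_sum, ← Finset.sum_add_distrib, Finset.mul_sum,
      ← Finset.sum_neg_distrib, ← Finset.sum_sub_distrib]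
    refine Finset.sum_congr rfl fun i _ => ?_
    ring
  -- nonnegativity of the squared norms
  have hKsq : ∀ t : ℝ, 0 ≤ (stackK n N k *ᵥ stackPhi n N f (x t) (w t)) ⬝ᵥ
      (stackK n N k *ᵥ stackPhi n N f (x t) (w t)) := fun t =>
    Finset.sum_nonneg fun p _ => mul_self_nonneg _
  have hQsq : ∀ t : ℝ, 0 ≤ (((stackF n N f (w t)).transpose *ᵥ
        (stackK n N k *ᵥ stackPhi n N f (x t) (w t))
      - kc • (G.lapMatrix ℝ *ᵥ (fun m => w t m - wstar m))) ⬝ᵥ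
     ((stackF n N f (w t)).transpose *ᵥ
        (stackK n N k *ᵥ stackPhi n N f (x t) (w t))
      - kc • (G.lapMatrix ℝ *ᵥ (fun m => w t m - wstar m)))) := fun t =>
    Finset.sum_nonneg fun i _ => mul_self_nonneg _
  -- the inequality part
  have hineq : ∀ t : ℝ, 0 ≤ t →
      (-((stackK n N k *ᵥ stackPhi n N f (x t) (w t)) ⬝ᵥ
            (stackK n N k *ᵥ stackPhi n N f (x t) (w t)))
          - (((stackF n N f (w t)).transpose *ᵥ
                (stackK n N k *ᵥ stackPhi n N f (x t) (w t))
              - kc • (G.lapMatrix ℝ *ᵥ (fun m => w t m - wstar m))) ⬝ᵥ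
             ((stackF n N f (w t)).transpose *ᵥ
                (stackK n N k *ᵥ stackPhi n N f (x t) (w t))
              - kc • (G.lapMatrix ℝ *ᵥ (fun m => w t m - wstar m)))))
        ≤ -((stackK n N k *ᵥ stackPhi n N f (x t) (w t)) ⬝ᵥ
            (stackK n N k *ᵥ stackPhi n N f (x t) (w t))) ∧
      -((stackK n N k *ᵥ stackPhi n N f (x t) (w t)) ⬝ᵥ
          (stackK n N k *ᵥ stackPhi n N f (x t) (w t))) ≤ 0 := by
    intro t _
    exact ⟨sub_le_self _ (hQsq t), neg_nonpos.mpr (hKsq t)⟩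
  -- antitonicity
  have hanti : AntitoneOn V (Set.Ici (0 : ℝ)) := by
    apply antitoneOn_of_deriv_nonpos (convex_Ici 0)
    · exact fun t ht => (hder t ht).continuousAt.continuousWithinAt
    · intro t ht
      rw [interior_Ici] at ht
      exact ((hder t ht.le).differentiableAt).differentiableWithinAt
    · intro t ht
      rw [interior_Ici] at ht
      rw [(hder t ht.le).deriv]
      have h := hineq t ht.le
      linarith [h.1, h.2]
  have hmono : ∀ s t : ℝ, 0 ≤ s → s ≤ t → V t ≤ V s := fun s t hs hst =>
    hanti (Set.mem_Ici.mpr hs) (Set.mem_Ici.mpr (hs.trans hst)) hst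
  refine ⟨hder, hineq, hmono, ?_⟩
  -- boundedness part
  have hVle : ∀ t : ℝ, 0 ≤ t → V t ≤ V 0 := fun t ht => hmono 0 t le_rfl ht
  have hKapp : ∀ (t : ℝ) (p : Fin N × Fin n),
      (stackK n N k *ᵥ stackPhi n N f (x t) (w t)) p
        = k p.1 p.2 * stackPhi n N f (x t) (w t) p := by
    intro t p
    simp [stackK, Matrix.mulVec_diagonal]
  have hAeq : ∀ t : ℝ, stackPhi n N f (x t) (w t) ⬝ᵥ
      (stackK n N k *ᵥ stackPhi n N f (x t) (w t))
      = ∑ p : Fin N × Fin n, k p.1 p.2 *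
          (stackPhi n N f (x t) (w t) p * stackPhi n N f (x t) (w t) p) := by
    intro t
    show ∑ p : Fin N × Fin n, _ * _ = _
    refine Finset.sum_congr rfl fun p _ => ?_
    rw [hKapp t p]; ring
  have hAnn : ∀ t : ℝ, 0 ≤ stackPhi n N f (x t) (w t) ⬝ᵥ
      (stackK n N k *ᵥ stackPhi n N f (x t) (w t)) := by
    intro t
    rw [hAeq t]
    exact Finset.sum_nonneg fun p _ => mul_nonneg (hk p.1 p.2).le (mul_self_nonneg _)
  have hBeq : ∀ t : ℝ, (fun m => w t m - wstar m) ⬝ᵥ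
      (G.lapMatrix ℝ *ᵥ (fun m => w t m - wstar m))
      = (D.transpose *ᵥ (fun m => w t m - wstar m)) ⬝ᵥ
        (D.transpose *ᵥ (fun m => w t m - wstar m)) := by
    intro t
    rw [hD, ← Matrix.mulVec_mulVec, Matrix.dotProduct_mulVec, ← Matrix.mulVec_transpose]
  have hBnn : ∀ t : ℝ, 0 ≤ (fun m => w t m - wstar m) ⬝ᵥ
      (G.lapMatrix ℝ *ᵥ (fun m => w t m - wstar m)) := by
    intro t
    rw [hBeq t]
    exact Finset.sum_nonneg fun e _ => mul_self_nonneg _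
  -- gain lower bound
  have hne : (Finset.univ : Finset (Fin N × Fin n)).Nonempty := Finset.univ_nonempty
  set kmin : ℝ := Finset.univ.inf' hne (fun p : Fin N × Fin n => k p.1 p.2) with hkmindef
  have hkmin : 0 < kmin := (Finset.lt_inf'_iff hne).mpr fun p _ => hk p.1 p.2
  refine ⟨Real.sqrt (2 * V 0 / kmin) + Real.sqrt (2 * V 0 / kc), ?_, ?_⟩
  · intro t ht p
    have hVt := hV t
    have hA2 : stackPhi n N f (x t) (w t) ⬝ᵥ
        (stackK n N k *ᵥ stackPhi n N f (x t) (w t)) ≤ 2 * V 0 := by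
      have := hVle t ht
      have := hBnn t
      nlinarith [hkc]
    have hterm : k p.1 p.2 * (stackPhi n N f (x t) (w t) p * stackPhi n N f (x t) (w t) p)
        ≤ 2 * V 0 := by
      refine le_trans ?_ hA2
      rw [hAeq t]
      exact Finset.single_le_sum
        (fun q _ => mul_nonneg (hk q.1 q.2).le (mul_self_nonneg _)) (Finset.mem_univ p)
    have hkp : kmin ≤ k p.1 p.2 := Finset.inf'_le _ (Finset.mem_univ p)
    have hsq : (stackPhi n N f (x t) (w t) p) ^ 2 ≤ 2 * V 0 / kmin := by
      rw [le_div_iff₀ hkmin]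
      nlinarith [mul_self_nonneg (stackPhi n N f (x t) (w t) p)]
    calc |stackPhi n N f (x t) (w t) p|
        = Real.sqrt ((stackPhi n N f (x t) (w t) p) ^ 2) := (Real.sqrt_sq_eq_abs _).symm
      _ ≤ Real.sqrt (2 * V 0 / kmin) := Real.sqrt_le_sqrt hsq
      _ ≤ _ := le_add_of_nonneg_right (Real.sqrt_nonneg _)
  · intro t ht e
    have hVt := hV t
    have hB2 : (fun m => w t m - wstar m) ⬝ᵥ
        (G.lapMatrix ℝ *ᵥ (fun m => w t m - wstar m)) ≤ 2 * V 0 / kc := by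
      rw [le_div_iff₀ hkc]
      have := hVle t ht
      have := hAnn t
      nlinarith
    have hterm : (D.transpose *ᵥ (fun m => w t m - wstar m)) e
        * (D.transpose *ᵥ (fun m => w t m - wstar m)) e ≤ 2 * V 0 / kc := by
      refine le_trans ?_ hB2
      rw [hBeq t]
      show _ ≤ ∑ i, (D.transpose *ᵥ fun m => w t m - wstar m) i
        * (D.transpose *ᵥ fun m => w t m - wstar m) i
      exact Finset.single_le_sum (fun q _ => mul_self_nonneg
        ((D.transpose *ᵥ fun m => w t m - wstar m) q)) (Finset.mem_univ e)
    have hsq : ((D.transpose *ᵥ (fun m => w t m - wstar m)) e) ^ 2 ≤ 2 * V 0 / kc := by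
      rw [pow_two]; exact hterm
    calc |(D.transpose *ᵥ (fun m => w t m - wstar m)) e|
        = Real.sqrt (((D.transpose *ᵥ (fun m => w t m - wstar m)) e) ^ 2) :=
          (Real.sqrt_sq_eq_abs _).symm
      _ ≤ Real.sqrt (2 * V 0 / kc) := Real.sqrt_le_sqrt hsq
      _ ≤ _ := le_add_of_nonneg_left (Real.sqrt_nonneg _)
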